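/- Let α, β, k be real numbers with α > 0, β > −1 and 0 < k < β + 1. Then, entrywise, ∫₀¹ x^{−1} W(x) dx = μ₋₁, where W is the 2×2 matrix-valued weight of the context and μ₋₁ = (Γ(α)Γ(β+2)/Γ(α+β+2)) · [[α+β−k+1, −1], [−1, ((α+1)(k+1)(α+β−k+2) − k(β−k+1))/((α+β+2)(β−k+1))]]. -/

import Mathlib

open Matrix

noncomputable def Vmat (α β k : ℝ) : Matrix (Fin 2) (Fin 2) ℝ :=
  !![1, 1; 0, -(α + β - k + 2) / (β - k + 1)]

noncomputable def Zmat (β k : ℝ) (x : ℝ) : Matrix (Fin 2) (Fin 2) ℝ :=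
  !![k * x + β - k + 1, (β - k + 1) * (1 - x);
     (β - k + 1) * (1 - x), (β - k + 1) * (1 - x) ^ 2]

/-- The weight matrix `W(x) = x^α (1-x)^β Vᵀ Z(x) V` of the `d = 2`
Jacobi-type example. -/
noncomputable def Wmat (α β k : ℝ) (x : ℝ) : Matrix (Fin 2) (Fin 2) ℝ :=
  (x ^ α * (1 - x) ^ β) • ((Vmat α β k)ᵀ * Zmat β k x * Vmat α β k)

/-- The zeroth moment `μ₀` of the weight `W` of the `d = 2` Jacobi-type
example. -/
noncomputable def mu0 (α β k : ℝ) : Matrix (Fin 2) (Fin 2) ℝ :=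
  (Real.Gamma (α + 1) * Real.Gamma (β + 2) * (α + β - k + 2) /
      Real.Gamma (α + β + 3)) •
    !![1, 0; 0, (α + 1) * (k + 1) / ((α + β + 3) * (β - k + 1))]

/-- The `(-1)`-st moment `μ₋₁` of the weight `W` of the `d = 2` Jacobi-type
example. -/
noncomputable def muM1 (α β k : ℝ) : Matrix (Fin 2) (Fin 2) ℝ :=
  (Real.Gamma α * Real.Gamma (β + 2) / Real.Gamma (α + β + 2)) •
    !![α + β - k + 1, -1;
       -1, ((α + 1) * (k + 1) * (α + β - k + 2) - k * (β - k + 1)) /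
         ((α + β + 2) * (β - k + 1))]

open MeasureTheory intervalIntegral

lemma betaCongr' (a b : ℝ) : ∀ x ∈ Set.uIcc (0:ℝ) 1,
    (x:ℂ) ^ ((a:ℂ) - 1) * ((1:ℂ) - x) ^ ((b:ℂ) - 1)
      = ((x ^ (a-1) * (1-x) ^ (b-1) : ℝ) : ℂ) := by
  intro x hx
  rw [Set.uIcc_of_le (by norm_num)] at hx
  rw [Complex.ofReal_mul, Complex.ofReal_cpow hx.1, Complex.ofReal_cpow (by linarith [hx.2])]
  push_cast
  ring_nf

lemma betaIntble (a b : ℝ) (ha : 0 < a) (hb : 0 < b) :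
    IntervalIntegrable (fun x => x ^ (a-1) * (1-x) ^ (b-1)) volume 0 1 := by
  have h := Complex.betaIntegral_convergent (u := a) (v := b) (by simpa) (by simpa)
  have h2 : IntervalIntegrable (fun x : ℝ => ((x ^ (a-1) * (1-x) ^ (b-1) : ℝ) : ℂ)) volume 0 1 := by
    refine h.congr ?_
    intro x hx
    exact betaCongr' a b x (Set.uIoc_subset_uIcc hx)
  rw [intervalIntegrable_iff]
  have h3 := (intervalIntegrable_iff.1 h2).re
  simpa [IntegrableOn] using h3

lemma betaVal (a b : ℝ) (ha : 0 < a) (hb : 0 < b) :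
    ∫ x in (0:ℝ)..1, x ^ (a-1) * (1-x) ^ (b-1)
      = Real.Gamma a * Real.Gamma b / Real.Gamma (a+b) := by
  have key := Complex.Gamma_mul_Gamma_eq_betaIntegral (s := a) (t := b) (by simpa) (by simpa)
  have hint : Complex.betaIntegral a b
      = ((∫ x in (0:ℝ)..1, x ^ (a-1) * (1-x) ^ (b-1) : ℝ) : ℂ) := by
    rw [Complex.betaIntegral, ← intervalIntegral.integral_ofReal]
    exact intervalIntegral.integral_congr (betaCongr' a b)
  rw [hint, ← Complex.ofReal_add, Complex.Gamma_ofReal, Complex.Gamma_ofReal,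
    Complex.Gamma_ofReal, ← Complex.ofReal_mul, ← Complex.ofReal_mul] at key
  have h := Complex.ofReal_inj.1 key
  have hG : Real.Gamma (a+b) ≠ 0 := (Real.Gamma_pos_of_pos (by linarith)).ne'
  field_simp
  linarith [h]

lemma combo (α β : ℝ) (hα : 0 < α) (hβ : β > -1) (c1 c2 c3 c4 : ℝ) :
    ∫ x in (0:ℝ)..1, (c1 * (x ^ α * (1-x) ^ β) + c2 * (x ^ (α-1) * (1-x) ^ β)
      + c3 * (x ^ (α-1) * (1-x) ^ (β+1)) + c4 * (x ^ (α-1) * (1-x) ^ (β+2)))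
    = Real.Gamma α * Real.Gamma (β+1) / Real.Gamma (α+β+2) *
        (c1 * α + c2 * (α+β+1) + c3 * (β+1) + c4 * ((β+1)*(β+2)/(α+β+2))) := by
  have h1 := betaVal (α+1) (β+1) (by linarith) (by linarith)
  have h2 := betaVal α (β+1) hα (by linarith)
  have h3 := betaVal α (β+2) hα (by linarith)
  have h4 := betaVal α (β+3) hα (by linarith)
  have j1 := betaIntble (α+1) (β+1) (by linarith) (by linarith)
  have j2 := betaIntble α (β+1) hα (by linarith)
  have j3 := betaIntble α (β+2) hα (by linarith)
  have j4 := betaIntble α (β+3) hα (by linarith)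
  simp only [show α+1-1 = α from by ring, show β+1-1 = β from by ring,
    show β+2-1 = β+1 from by ring, show β+3-1 = β+2 from by ring] at h1 h2 h3 h4 j1 j2 j3 j4
  rw [integral_add (((j1.const_mul c1).add (j2.const_mul c2)).add (j3.const_mul c3))
      (j4.const_mul c4),
    integral_add ((j1.const_mul c1).add (j2.const_mul c2)) (j3.const_mul c3),
    integral_add (j1.const_mul c1) (j2.const_mul c2),
    intervalIntegral.integral_const_mul, intervalIntegral.integral_const_mul, intervalIntegral.integral_const_mul, intervalIntegral.integral_const_mul,
    h1, h2, h3, h4]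
  have hg1 : (0:ℝ) < Real.Gamma α := Real.Gamma_pos_of_pos hα
  have hg2 : (0:ℝ) < Real.Gamma (β+1) := Real.Gamma_pos_of_pos (by linarith)
  have hg3 : (0:ℝ) < Real.Gamma (α+β+1) := Real.Gamma_pos_of_pos (by linarith)
  have r1 : Real.Gamma (α+1) = α * Real.Gamma α := Real.Gamma_add_one hα.ne'
  have r2 : Real.Gamma (β+2) = (β+1) * Real.Gamma (β+1) := by
    rw [show (β+2:ℝ) = (β+1)+1 from by ring, Real.Gamma_add_one (by linarith)]
  have r3 : Real.Gamma (β+3) = (β+2) * ((β+1) * Real.Gamma (β+1)) := by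
    rw [show (β+3:ℝ) = (β+2)+1 from by ring, Real.Gamma_add_one (by linarith), r2]
  have r4 : Real.Gamma (α+1+(β+1)) = (α+β+1) * Real.Gamma (α+β+1) := by
    rw [show (α+1+(β+1):ℝ) = (α+β+1)+1 from by ring, Real.Gamma_add_one (by linarith)]
  have r5 : Real.Gamma (α+(β+1)) = Real.Gamma (α+β+1) := by
    rw [show (α+(β+1):ℝ) = α+β+1 from by ring]
  have r6 : Real.Gamma (α+(β+2)) = (α+β+1) * Real.Gamma (α+β+1) := by
    rw [show (α+(β+2):ℝ) = (α+β+1)+1 from by ring, Real.Gamma_add_one (by linarith)]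
  have r7 : Real.Gamma (α+(β+3)) = (α+β+2) * ((α+β+1) * Real.Gamma (α+β+1)) := by
    rw [show (α+(β+3):ℝ) = (α+β+2)+1 from by ring, Real.Gamma_add_one (by linarith),
      show (α+β+2:ℝ) = (α+β+1)+1 from by ring, Real.Gamma_add_one (by linarith)]
  have r8 : Real.Gamma (α+β+2) = (α+β+1) * Real.Gamma (α+β+1) := by
    rw [show (α+β+2:ℝ) = (α+β+1)+1 from by ring, Real.Gamma_add_one (by linarith)]
  rw [r1, r2, r3, r4, r5, r6, r7, r8]
  have hne1 : (α+β+1:ℝ) ≠ 0 := by linarith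
  have hne2 : (α+β+2:ℝ) ≠ 0 := by linarith
  field_simp

/-- The `(-1)`-st moment of the weight `W`: `∫₀¹ x⁻¹ W(x) dx = μ₋₁`,
entrywise. -/
theorem stmt_13 (α β k : ℝ) (hα : 0 < α) (hβ : β > -1)
    (hk : 0 < k) (hkβ : k < β + 1) :
    ∀ i j : Fin 2,
      ∫ x in (0 : ℝ)..1, (x⁻¹ • Wmat α β k x) i j = muM1 α β k i j := by
  have hd : (0:ℝ) < β - k + 1 := by linarith
  have hd' : (β - k + 1 : ℝ) ≠ 0 := hd.ne'
  have hg2 : (0:ℝ) < Real.Gamma (β+1) := Real.Gamma_pos_of_pos (by linarith)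
  have hgs : (0:ℝ) < Real.Gamma (α+β+2) := Real.Gamma_pos_of_pos (by linarith)
  have r2 : Real.Gamma (β+2) = (β+1) * Real.Gamma (β+1) := by
    rw [show (β+2:ℝ) = (β+1)+1 from by ring, Real.Gamma_add_one (by linarith)]
  have hne2 : (α+β+2:ℝ) ≠ 0 := by linarith
  have key : ∀ (i j : Fin 2) (c1 c2 c3 c4 : ℝ),
      (∀ x : ℝ, 0 < x → x < 1 → (x⁻¹ • Wmat α β k x) i j
        = c1 * (x ^ α * (1-x) ^ β) + c2 * (x ^ (α-1) * (1-x) ^ β)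
          + c3 * (x ^ (α-1) * (1-x) ^ (β+1)) + c4 * (x ^ (α-1) * (1-x) ^ (β+2))) →
      ∫ x in (0:ℝ)..1, (x⁻¹ • Wmat α β k x) i j
        = Real.Gamma α * Real.Gamma (β+1) / Real.Gamma (α+β+2) *
            (c1 * α + c2 * (α+β+1) + c3 * (β+1) + c4 * ((β+1)*(β+2)/(α+β+2))) := by
    intro i j c1 c2 c3 c4 hpt
    have hae : ∀ᵐ x : ℝ, x ∈ Set.uIoc (0:ℝ) 1 → (x⁻¹ • Wmat α β k x) i j
        = c1 * (x ^ α * (1-x) ^ β) + c2 * (x ^ (α-1) * (1-x) ^ β)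
          + c3 * (x ^ (α-1) * (1-x) ^ (β+1)) + c4 * (x ^ (α-1) * (1-x) ^ (β+2)) := by
      filter_upwards [compl_mem_ae_iff.mpr (measure_singleton (1:ℝ))] with x hx1 hx
      rw [Set.uIoc_of_le (by norm_num : (0:ℝ) ≤ 1)] at hx
      exact hpt x hx.1 (lt_of_le_of_ne hx.2 (by simpa using hx1))
    rw [intervalIntegral.integral_congr_ae hae, combo α β hα hβ]
  intro i j
  fin_cases i <;> fin_cases j
  · show (∫ x in (0:ℝ)..1, (x⁻¹ • Wmat α β k x) 0 0) = muM1 α β k 0 0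
    rw [key 0 0 k (β-k+1) 0 0 (fun x hx0 hx1 => by
      have h1x : (0:ℝ) < 1 - x := by linarith
      have e1 : x ^ (α-1) = x ^ α / x := by rw [Real.rpow_sub hx0, Real.rpow_one]
      have e2 : (1-x) ^ (β+1) = (1-x)^β * (1-x) := by rw [Real.rpow_add h1x, Real.rpow_one]
      have e3 : (1-x) ^ (β+2) = (1-x)^β * (1-x) * (1-x) := by
        rw [show (β+2:ℝ) = (β+1)+1 from by ring, Real.rpow_add h1x, Real.rpow_one, e2]
      simp only [Wmat, Vmat, Zmat, Matrix.smul_apply, smul_eq_mul, Matrix.mul_apply,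
        Fin.sum_univ_two, Matrix.transpose_apply, Matrix.cons_val', Matrix.cons_val_zero,
        Matrix.cons_val_one, Matrix.head_cons, Matrix.empty_val', Matrix.cons_val_fin_one,
        Matrix.head_fin_const, Matrix.of_apply]
      rw [e1, e2, e3]
      field_simp
      ring)]
    simp only [muM1, Matrix.smul_apply, smul_eq_mul, Matrix.cons_val', Matrix.cons_val_zero,
      Matrix.cons_val_one, Matrix.head_cons, Matrix.empty_val', Matrix.cons_val_fin_one, Matrix.of_apply]
    rw [r2]
    field_simp
    ring
  · show (∫ x in (0:ℝ)..1, (x⁻¹ • Wmat α β k x) 0 1) = muM1 α β k 0 1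
    rw [key 0 1 k (β-k+1) (-(α+β-k+2)) 0 (fun x hx0 hx1 => by
      have h1x : (0:ℝ) < 1 - x := by linarith
      have e1 : x ^ (α-1) = x ^ α / x := by rw [Real.rpow_sub hx0, Real.rpow_one]
      have e2 : (1-x) ^ (β+1) = (1-x)^β * (1-x) := by rw [Real.rpow_add h1x, Real.rpow_one]
      have e3 : (1-x) ^ (β+2) = (1-x)^β * (1-x) * (1-x) := by
        rw [show (β+2:ℝ) = (β+1)+1 from by ring, Real.rpow_add h1x, Real.rpow_one, e2]
      simp only [Wmat, Vmat, Zmat, Matrix.smul_apply, smul_eq_mul, Matrix.mul_apply,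
        Fin.sum_univ_two, Matrix.transpose_apply, Matrix.cons_val', Matrix.cons_val_zero,
        Matrix.cons_val_one, Matrix.head_cons, Matrix.empty_val', Matrix.cons_val_fin_one,
        Matrix.head_fin_const, Matrix.of_apply]
      rw [e1, e2, e3]
      field_simp
      ring)]
    simp only [muM1, Matrix.smul_apply, smul_eq_mul, Matrix.cons_val', Matrix.cons_val_zero,
      Matrix.cons_val_one, Matrix.head_cons, Matrix.empty_val', Matrix.cons_val_fin_one, Matrix.of_apply]
    rw [r2]
    field_simp
    ring
  · show (∫ x in (0:ℝ)..1, (x⁻¹ • Wmat α β k x) 1 0) = muM1 α β k 1 0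
    rw [key 1 0 k (β-k+1) (-(α+β-k+2)) 0 (fun x hx0 hx1 => by
      have h1x : (0:ℝ) < 1 - x := by linarith
      have e1 : x ^ (α-1) = x ^ α / x := by rw [Real.rpow_sub hx0, Real.rpow_one]
      have e2 : (1-x) ^ (β+1) = (1-x)^β * (1-x) := by rw [Real.rpow_add h1x, Real.rpow_one]
      have e3 : (1-x) ^ (β+2) = (1-x)^β * (1-x) * (1-x) := by
        rw [show (β+2:ℝ) = (β+1)+1 from by ring, Real.rpow_add h1x, Real.rpow_one, e2]
      simp only [Wmat, Vmat, Zmat, Matrix.smul_apply, smul_eq_mul, Matrix.mul_apply,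
        Fin.sum_univ_two, Matrix.transpose_apply, Matrix.cons_val', Matrix.cons_val_zero,
        Matrix.cons_val_one, Matrix.head_cons, Matrix.empty_val', Matrix.cons_val_fin_one,
        Matrix.head_fin_const, Matrix.of_apply]
      rw [e1, e2, e3]
      field_simp
      ring)]
    simp only [muM1, Matrix.smul_apply, smul_eq_mul, Matrix.cons_val', Matrix.cons_val_zero,
      Matrix.cons_val_one, Matrix.head_cons, Matrix.empty_val', Matrix.cons_val_fin_one, Matrix.of_apply]
    rw [r2]
    field_simp
    ring
  · show (∫ x in (0:ℝ)..1, (x⁻¹ • Wmat α β k x) 1 1) = muM1 α β k 1 1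
    rw [key 1 1 k (β-k+1) (-2*(α+β-k+2)) ((α+β-k+2)^2/(β-k+1)) (fun x hx0 hx1 => by
      have h1x : (0:ℝ) < 1 - x := by linarith
      have e1 : x ^ (α-1) = x ^ α / x := by rw [Real.rpow_sub hx0, Real.rpow_one]
      have e2 : (1-x) ^ (β+1) = (1-x)^β * (1-x) := by rw [Real.rpow_add h1x, Real.rpow_one]
      have e3 : (1-x) ^ (β+2) = (1-x)^β * (1-x) * (1-x) := by
        rw [show (β+2:ℝ) = (β+1)+1 from by ring, Real.rpow_add h1x, Real.rpow_one, e2]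
      simp only [Wmat, Vmat, Zmat, Matrix.smul_apply, smul_eq_mul, Matrix.mul_apply,
        Fin.sum_univ_two, Matrix.transpose_apply, Matrix.cons_val', Matrix.cons_val_zero,
        Matrix.cons_val_one, Matrix.head_cons, Matrix.empty_val', Matrix.cons_val_fin_one,
        Matrix.head_fin_const, Matrix.of_apply]
      rw [e1, e2, e3]
      field_simp
      ring)]
    simp only [muM1, Matrix.smul_apply, smul_eq_mul, Matrix.cons_val', Matrix.cons_val_zero,
      Matrix.cons_val_one, Matrix.head_cons, Matrix.empty_val', Matrix.cons_val_fin_one, Matrix.of_apply]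
    rw [r2]
    field_simp
    ring
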